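/- Fix an integer K ≥ 2 and reals λ > 0, μ > 0. Set q = λ/(λ+μ), ρ = λ/μ, a_i = Σ_{j=0}^{K−i} ρ^j for 1 ≤ i ≤ K, b_1 = 0 and b_i = Σ_{j=K−i+1}^{K−1} (K−j)·ρ^j for 2 ≤ i ≤ K. Suppose reals E_1, ..., E_K satisfy: E_1 = q·E_2 + 1/(λ+μ); E_i = (1−q)·E_{i−1} + q·E_{i+1} + 1/(λ+μ) for all 1 < i < K; and E_K = E_{K−1} + 1/μ. Then E_i = (i·a_i + b_i)/μ for every 1 ≤ i ≤ K. In particular, the mean busy period of the impatient class started with one customer equals E[Ψ_i] = a_1/μ. -/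

import Mathlib

/-- Solution of the first-moment busy-period recursions of the impatient class
under the PS policy. -/
theorem busy_period_first_moment
    (K : ℕ) (hK : 2 ≤ K) (lam mu : ℝ) (hlam : 0 < lam) (hmu : 0 < mu)
    (E : ℕ → ℝ)
    (h1 : E 1 = (lam / (lam + mu)) * E 2 + 1 / (lam + mu))
    (hmid : ∀ i, 1 < i → i < K →
      E i = (1 - lam / (lam + mu)) * E (i - 1) + (lam / (lam + mu)) * E (i + 1)
            + 1 / (lam + mu))
    (hKeq : E K = E (K - 1) + 1 / mu) :
    (∀ i, 1 ≤ i → i ≤ K →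
      E i = ((i : ℝ) * (∑ j ∈ Finset.range (K - i + 1), (lam / mu) ^ j)
            + ∑ j ∈ Finset.Icc (K - i + 1) (K - 1), ((K : ℝ) - (j : ℝ)) * (lam / mu) ^ j) / mu)
    ∧ E 1 = (∑ j ∈ Finset.range K, (lam / mu) ^ j) / mu := by
  have hsum : lam + mu ≠ 0 := by positivity
  have hmu' : mu ≠ 0 := ne_of_gt hmu
  set ρ : ℝ := lam / mu with hρ
  set S : ℕ → ℝ := fun n => ∑ j ∈ Finset.range n, ρ ^ j with hS
  -- downward recursion for differences
  have key : ∀ t, t ≤ K - 2 → E (K - t) - E (K - t - 1) = S (t + 1) / mu := by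
    intro t
    induction t with
    | zero =>
      intro _
      have : S 1 = 1 := by simp [hS]
      rw [this]
      simp only [Nat.sub_zero]
      linarith [hKeq]
    | succ t ih =>
      intro ht
      have iht := ih (by omega)
      set i := K - t - 1 with hi
      have hi2 : 2 ≤ i := by omega
      have hiK : i < K := by omega
      have hmid' := hmid i (by omega) hiK
      have e1 : K - (t + 1) = i := by omega
      have e2 : K - (t + 1) - 1 = i - 1 := by omega
      have e3 : i + 1 = K - t := by omega
      rw [e3] at hmid'
      rw [e1]
      -- clear denominators in hmid'
      have hmid2 : (lam + mu) * E i = mu * E (i - 1) + lam * E (K - t) + 1 := by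
        rw [hmid']
        field_simp
        try ring
      have hstep : E i - E (i - 1) = (lam * (E (K - t) - E i) + 1) / mu := by
        rw [eq_div_iff hmu']
        linear_combination hmid2
      have hSsucc : S (t + 1 + 1) = ρ * S (t + 1) + 1 := geom_sum_succ
      rw [iht] at hstep
      rw [hstep, hSsucc, hρ]
      ring
  have hd : ∀ i, 1 ≤ i → i ≤ K - 1 → E (i + 1) - E i = S (K - i) / mu := by
    intro i hi1 hi2
    have h := key (K - 1 - i) (by omega)
    have e1 : K - (K - 1 - i) = i + 1 := by omega
    have e2 : K - (K - 1 - i) - 1 = i := by omega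
    have e3 : K - 1 - i + 1 = K - i := by omega
    rw [e2, e1, e3] at h
    exact h
  -- value of E 1
  have hE1 : E 1 = S K / mu := by
    have hd1 : E 2 - E 1 = S (K - 1) / mu := hd 1 le_rfl (by omega)
    have h12 : (lam + mu) * E 1 = lam * E 2 + 1 := by
      rw [h1]
      field_simp
      try ring
    have hSK : S K = ρ * S (K - 1) + 1 := by
      have hKe : K = (K - 1) + 1 := by omega
      rw [hKe]
      exact geom_sum_succ
    have hstep : E 1 = (lam * (E 2 - E 1) + 1) / mu := by
      rw [eq_div_iff hmu']
      linear_combination h12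
    rw [hd1] at hstep
    rw [hstep, hSK, hρ]
    ring
  -- E i as a telescoping sum
  have hEi : ∀ i, 1 ≤ i → i ≤ K → E i = (∑ t ∈ Finset.Icc 1 i, S (K + 1 - t)) / mu := by
    intro i hi
    induction i, hi using Nat.le_induction with
    | base =>
      intro _
      simpa using hE1
    | succ i hi ih =>
      intro hiK
      have ih' := ih (by omega)
      have hd' := hd i hi (by omega)
      rw [← Finset.insert_Icc_right_eq_Icc_add_one (by omega : 1 ≤ i + 1),
        Finset.sum_insert (by simp)]
      have e : K + 1 - (i + 1) = K - i := by omega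
      rw [e, add_div, ← ih']
      linarith
  -- combinatorial identity for the telescoping sum
  have hid : ∀ i, 1 ≤ i → i ≤ K → (∑ t ∈ Finset.Icc 1 i, S (K + 1 - t))
      = (i : ℝ) * S (K - i + 1)
        + ∑ j ∈ Finset.Icc (K - i + 1) (K - 1), ((K : ℝ) - (j : ℝ)) * ρ ^ j := by
    intro i hi
    induction i, hi using Nat.le_induction with
    | base =>
      intro _
      have h1' : K - 1 + 1 = K := by omega
      have h2 : Finset.Icc K (K - 1) = ∅ := Finset.Icc_eq_empty (by omega)
      have h3 : K + 1 - 1 = K := by omega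
      simp [h1', h2, h3]
    | succ i hi ih =>
      intro hiK
      have hiK' : i ≤ K := by omega
      rw [← Finset.insert_Icc_right_eq_Icc_add_one (by omega : 1 ≤ i + 1),
        Finset.sum_insert (by simp), ih hiK']
      have e1 : K + 1 - (i + 1) = K - i := by omega
      have e2 : K - (i + 1) + 1 = K - i := by omega
      rw [e1, e2]
      have hsplit : S (K - i + 1) = S (K - i) + ρ ^ (K - i) := by
        simp [hS, Finset.sum_range_succ]
      have hins : Finset.Icc (K - i) (K - 1)
          = insert (K - i) (Finset.Icc (K - i + 1) (K - 1)) :=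
        (Finset.insert_Icc_add_one_left_eq_Icc (by omega)).symm
      rw [hins, Finset.sum_insert (by simp), hsplit]
      have hcast : ((K : ℝ) - ((K - i : ℕ) : ℝ)) = (i : ℝ) := by
        push_cast [Nat.cast_sub hiK']
        ring
      rw [hcast]
      push_cast
      ring
  constructor
  · intro i hi1 hi2
    rw [hEi i hi1 hi2, hid i hi1 hi2]
  · rw [hE1]
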